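/- Let G be a first order reaction graph embedded in ℕ₀^d with no redundant species, and suppose G is A-endotactic where A = {±Σ_{i∈I} e_i : ∅ ≠ I ⊆ [d]}. Then the set of sources of G satisfies {e_1, ..., e_d} ⊆ V₊ ⊆ {0, e_1, ..., e_d}, and V₊ = {0, e_1, ..., e_d} if and only if 0 is a vertex of G. -/
import Mathlib


open Matrix Finset
open scoped Matrix Classical

abbrev Vec (d : ℕ) := Fin d → ℝ
abbrev Edge (d : ℕ) := Vec d × Vec d

/-- Sources of edges whose reaction vector is not orthogonal to `u`. -/
def srcU {d : ℕ} (E : Finset (Edge d)) (u : Vec d) : Set (Vec d) :=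
  {y | ∃ y', (y, y') ∈ E ∧ (y' - y) ⬝ᵥ u ≠ 0}

/-- `G` is `u`-endotactic: no `u`-endotacticity violating reaction. -/
def uEndotactic {d : ℕ} (E : Finset (Edge d)) (u : Vec d) : Prop :=
  ¬ ∃ y y', (y, y') ∈ E ∧ 0 < (y' - y) ⬝ᵥ u ∧ ∀ z ∈ srcU E u, z ⬝ᵥ u ≤ y ⬝ᵥ u

def Endotactic {d : ℕ} (E : Finset (Edge d)) : Prop := ∀ u : Vec d, uEndotactic E u

/-- Reachability by a directed path. -/
def Reach {d : ℕ} (E : Finset (Edge d)) : Vec d → Vec d → Prop :=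
  Relation.ReflTransGen (fun a b => (a, b) ∈ E)

def IsEig {d : ℕ} (A : Matrix (Fin d) (Fin d) ℝ) (μ : ℂ) : Prop :=
  ∃ v : Fin d → ℂ, v ≠ 0 ∧ (A.map Complex.ofReal).mulVec v = μ • v

def InV {d : ℕ} (E : Finset (Edge d)) (y : Vec d) : Prop :=
  ∃ e ∈ E, e.1 = y ∨ e.2 = y

def IsSource {d : ℕ} (E : Finset (Edge d)) (y : Vec d) : Prop :=
  ∃ y', (y, y') ∈ E

/-- `G` is `𝒜`-endotactic for `𝒜 = {± Σ_{i ∈ I} e_i : ∅ ≠ I ⊆ [d]}`. -/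
def AEndotactic {d : ℕ} (E : Finset (Edge d)) : Prop :=
  ∀ I : Finset (Fin d), I.Nonempty →
    uEndotactic E (∑ i ∈ I, (Pi.single i 1 : Vec d)) ∧
    uEndotactic E (-∑ i ∈ I, (Pi.single i 1 : Vec d))


lemma sum_single_apply {d : ℕ} (I : Finset (Fin d)) (j : Fin d) :
    (∑ i ∈ I, (Pi.single i (1:ℝ) : Vec d)) j = if j ∈ I then 1 else 0 := by
  rw [Finset.sum_apply]
  simp [Pi.single_apply]

lemma dot_sumsingle {d : ℕ} (v : Vec d) (I : Finset (Fin d)) :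
    v ⬝ᵥ (∑ i ∈ I, (Pi.single i (1:ℝ) : Vec d)) = ∑ i ∈ I, v i := by
  simp only [dotProduct, sum_single_apply, mul_ite, mul_one, mul_zero]
  simp [Finset.sum_ite_mem]

lemma source_form {d : ℕ} (E : Finset (Edge d))
    (hnat : ∀ y, InV E y → ∀ i, ∃ n : ℕ, y i = (n : ℝ))
    (hfo : ∀ y, IsSource E y → ∑ i, y i ≤ 1) :
    ∀ y, IsSource E y → y = 0 ∨ ∃ i : Fin d, y = Pi.single i 1 := by
  intro y hy
  obtain ⟨y', hE⟩ := hy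
  have hInV : InV E y := ⟨(y, y'), hE, Or.inl rfl⟩
  choose n hn using hnat y hInV
  have hsum : (∑ i, n i) ≤ 1 := by
    have h := hfo y ⟨y', hE⟩
    simp_rw [hn] at h
    exact_mod_cast h
  by_cases h0 : ∀ i, n i = 0
  · left; funext i; simp [hn i, h0 i]
  · right
    push_neg at h0
    obtain ⟨i, hi⟩ := h0
    have hle : ∀ j, n j ≤ ∑ k, n k := fun j =>
      Finset.single_le_sum (fun _ _ => Nat.zero_le _) (Finset.mem_univ j)
    have h1 : n i = 1 := le_antisymm (le_trans (hle i) hsum) (Nat.one_le_iff_ne_zero.mpr hi)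
    refine ⟨i, funext fun j => ?_⟩
    rcases eq_or_ne j i with rfl | hji
    · simp [hn j, h1]
    · have hj0 : n j = 0 := by
        have h2 : n j ≤ ∑ k ∈ Finset.univ.erase i, n k :=
          Finset.single_le_sum (fun _ _ => Nat.zero_le _)
            (Finset.mem_erase.mpr ⟨hji, Finset.mem_univ j⟩)
        have h3 : ∑ k ∈ Finset.univ.erase i, n k + n i = ∑ k, n k :=
          Finset.sum_erase_add _ _ (Finset.mem_univ i)
        omega
      simp [hn j, hj0, Pi.single_apply, hji]

/-- For an `𝒜`-endotactic first order reaction graph with no redundant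
species, the sources satisfy `{e_1,…,e_d} ⊆ V₊ ⊆ {0, e_1,…,e_d}`, and
`V₊ = {0, e_1,…,e_d}` iff `0` is a vertex. -/
theorem stmt11 {d : ℕ} (E : Finset (Edge d))
    (hsimple : ∀ e ∈ E, e.1 ≠ e.2)
    (hnat : ∀ y, InV E y → ∀ i, ∃ n : ℕ, y i = (n : ℝ))
    (hfo : ∀ y, IsSource E y → ∑ i, y i ≤ 1)
    (hnored : ∀ i : Fin d, ∃ e ∈ E, e.2 i ≠ e.1 i)
    (hA : AEndotactic E) :
    (∀ i : Fin d, IsSource E (Pi.single i 1)) ∧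
    (∀ y, IsSource E y → y = 0 ∨ ∃ i : Fin d, y = Pi.single i 1) ∧
    (IsSource E (0 : Vec d) ↔ InV E (0 : Vec d)) := by
  have hsf := source_form E hnat hfo
  have key1 : ∀ i : Fin d, IsSource E (Pi.single i 1) := by
    intro i
    by_contra hns
    obtain ⟨e, heE, hne⟩ := hnored i
    have heE' : (e.1, e.2) ∈ E := by rwa [Prod.mk.eta]
    have hsrc : IsSource E e.1 := ⟨e.2, heE'⟩
    have hsi : e.1 i = 0 := by
      rcases hsf e.1 hsrc with h0 | ⟨j, hj⟩
      · simp [h0]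
      · rcases eq_or_ne j i with rfl | hji
        · exact absurd (hj ▸ hsrc) hns
        · simp [hj, Pi.single_apply, hji.symm]
    have hti : (1 : ℝ) ≤ e.2 i := by
      obtain ⟨m, hm⟩ := hnat e.2 ⟨e, heE, Or.inr rfl⟩ i
      have : m ≠ 0 := by
        rintro rfl
        exact hne (by rw [hm, hsi]; norm_num)
      rw [hm]
      exact_mod_cast Nat.one_le_iff_ne_zero.mpr this
    have hu := (hA {i} (Finset.singleton_nonempty i)).1
    refine hu ⟨e.1, e.2, heE', ?_, ?_⟩
    · rw [dot_sumsingle, Finset.sum_singleton, Pi.sub_apply, hsi]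
      linarith
    · rintro z ⟨z', hz', -⟩
      rw [dot_sumsingle, dot_sumsingle, Finset.sum_singleton, Finset.sum_singleton, hsi]
      rcases hsf z ⟨z', hz'⟩ with rfl | ⟨j, rfl⟩
      · simp
      · rcases eq_or_ne j i with rfl | hji
        · exact absurd ⟨z', hz'⟩ hns
        · simp [Pi.single_apply, hji.symm]
  refine ⟨key1, hsf, ⟨fun ⟨y', h⟩ => ⟨(0, y'), h, Or.inl rfl⟩, ?_⟩⟩
  rintro ⟨e, heE, h⟩
  rcases h with h1 | h2
  · exact ⟨e.2, by rwa [← h1, Prod.mk.eta]⟩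
  by_contra hns
  have heE' : (e.1, e.2) ∈ E := by rwa [Prod.mk.eta]
  have hsrc : IsSource E e.1 := ⟨e.2, heE'⟩
  obtain ⟨i, hi⟩ : ∃ i : Fin d, e.1 = Pi.single i 1 := by
    rcases hsf e.1 hsrc with h0 | hj
    · exact absurd (by rw [h0, h2]) (hsimple e heE)
    · exact hj
  have : Nonempty (Fin d) := ⟨i⟩
  have hu := (hA Finset.univ Finset.univ_nonempty).2
  have hsum1 : ∀ j : Fin d, ∑ k, (Pi.single j (1:ℝ) : Vec d) k = 1 := by
    intro j
    simp [Pi.single_apply]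
  refine hu ⟨e.1, e.2, heE', ?_, ?_⟩
  · rw [dotProduct_neg, dot_sumsingle]
    have : ∑ k, (e.2 - e.1) k = -1 := by
      simp only [Pi.sub_apply, Finset.sum_sub_distrib, hi, h2, hsum1]
      simp
    rw [this]; norm_num
  · rintro z ⟨z', hz', -⟩
    rw [dotProduct_neg, dotProduct_neg, dot_sumsingle, dot_sumsingle, hi, hsum1]
    rcases hsf z ⟨z', hz'⟩ with rfl | ⟨j, rfl⟩
    · exact absurd ⟨z', hz'⟩ hns
    · rw [hsum1]
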